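/- arXiv:0909.4890 — 4 statements merged into one kernel-verified Lean document; each statement's English description precedes it below -/
import Mathlib

section
/- For every integer n ≥ 2, the quantity A_n = n·k_n − (1/4)·Σ_{k=1}^{n} 1/sin(φ_k/2) is strictly negative. -/
/-- `k_n = (1/(4n)) · Σ_{k=1}^{n-1} 1/sin(kπ/n)` -/
noncomputable def kn (n : ℕ) : ℝ :=
  (1 / (4 * n)) * ∑ k ∈ Finset.Icc 1 (n - 1), 1 / Real.sin (k * Real.pi / n)

/-- `φ_k = (2k-1)π/n` -/
noncomputable def phi (n k : ℕ) : ℝ := (2 * (k : ℝ) - 1) * Real.pi / n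

lemma key' (m d : ℝ) (hm : 0 < Real.sin m) (hd : 0 < Real.cos d)
    (h1 : 0 < Real.sin (m + d)) (h2 : 0 < Real.sin (m - d)) :
    1 / Real.sin m ≤ (1 / Real.sin (m + d) + 1 / Real.sin (m - d)) / 2 := by
  have e1 : Real.sin (m + d) = Real.sin m * Real.cos d + Real.cos m * Real.sin d :=
    Real.sin_add m d
  have e2 : Real.sin (m - d) = Real.sin m * Real.cos d - Real.cos m * Real.sin d :=
    Real.sin_sub m d
  have p1 : Real.sin m ^ 2 + Real.cos m ^ 2 = 1 := Real.sin_sq_add_cos_sq m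
  have p2 : Real.sin d ^ 2 + Real.cos d ^ 2 = 1 := Real.sin_sq_add_cos_sq d
  have hcd1 : Real.cos d ≤ 1 := Real.cos_le_one d
  have key : 2 * (Real.sin (m + d) * Real.sin (m - d)) ≤
      Real.sin m * (Real.sin (m + d) + Real.sin (m - d)) := by
    rw [e1, e2]
    nlinarith [sq_nonneg (Real.cos m * Real.sin d),
      mul_nonneg (mul_nonneg (sq_nonneg (Real.sin m)) hd.le) (sub_nonneg.2 hcd1)]
  have h : (1 / Real.sin (m + d) + 1 / Real.sin (m - d)) / 2 - 1 / Real.sin m =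
      (Real.sin m * (Real.sin (m + d) + Real.sin (m - d)) -
        2 * (Real.sin (m + d) * Real.sin (m - d))) /
      (2 * Real.sin (m + d) * Real.sin (m - d) * Real.sin m) := by
    field_simp
    ring
  have hpos : 0 ≤ (1 / Real.sin (m + d) + 1 / Real.sin (m - d)) / 2 - 1 / Real.sin m := by
    rw [h]
    apply div_nonneg (by linarith) (by positivity)
  linarith

lemma key (a b : ℝ) (ha : 0 < a) (hb : 0 < b) (ha' : a < Real.pi) (hb' : b < Real.pi) :
    1 / Real.sin ((a + b) / 2) ≤ (1 / Real.sin a + 1 / Real.sin b) / 2 := by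
  have hea : a = (a + b) / 2 + (a - b) / 2 := by ring
  have heb : b = (a + b) / 2 - (a - b) / 2 := by ring
  have hm : 0 < Real.sin ((a + b) / 2) :=
    Real.sin_pos_of_pos_of_lt_pi (by linarith) (by linarith)
  have hd : 0 < Real.cos ((a - b) / 2) :=
    Real.cos_pos_of_mem_Ioo ⟨by linarith, by linarith⟩
  have h1 : 0 < Real.sin ((a + b) / 2 + (a - b) / 2) := by
    rw [← hea]; exact Real.sin_pos_of_pos_of_lt_pi ha ha'
  have h2 : 0 < Real.sin ((a + b) / 2 - (a - b) / 2) := by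
    rw [← heb]; exact Real.sin_pos_of_pos_of_lt_pi hb hb'
  have := key' ((a + b) / 2) ((a - b) / 2) hm hd h1 h2
  rw [← hea, ← heb] at this
  exact this

/-- For every `n ≥ 2`, `A_n = n·k_n − (1/4)·Σ_{k=1}^{n} 1/sin(φ_k/2) < 0`. -/
theorem An_neg (n : ℕ) (hn : 2 ≤ n) :
    (n : ℝ) * kn n - (1 / 4) * ∑ k ∈ Finset.Icc 1 n, 1 / Real.sin (phi n k / 2) < 0 := by
  have hn0 : (0 : ℝ) < n := by positivity
  have hpi : (0 : ℝ) < Real.pi := Real.pi_pos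
  set g : ℕ → ℝ := fun k => 1 / Real.sin (phi n k / 2) with hg
  -- positivity of sin(phi k / 2) for 1 ≤ k ≤ n
  have hsin : ∀ k, 1 ≤ k → k ≤ n → 0 < Real.sin (phi n k / 2) := by
    intro k hk1 hk2
    apply Real.sin_pos_of_pos_of_lt_pi
    · unfold phi
      have : (1 : ℝ) ≤ k := by exact_mod_cast hk1
      have h2 : (0:ℝ) < 2 * (k:ℝ) - 1 := by linarith
      positivity
    · unfold phi
      have hk2' : (k : ℝ) ≤ n := by exact_mod_cast hk2
      rw [div_lt_iff₀ (by norm_num)]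
      rw [div_lt_iff₀ hn0]
      nlinarith
  have hg1 : 0 < g 1 := by
    simp only [hg]
    exact one_div_pos.mpr (hsin 1 le_rfl (by omega))
  have hgn : 0 < g n := by
    simp only [hg]
    exact one_div_pos.mpr (hsin n (by omega) le_rfl)
  -- termwise bound
  have hterm : ∀ k ∈ Finset.Icc 1 (n - 1),
      1 / Real.sin ((k : ℝ) * Real.pi / n) ≤ (g k + g (k + 1)) / 2 := by
    intro k hk
    rw [Finset.mem_Icc] at hk
    obtain ⟨hk1, hk2⟩ := hk
    have hk1' : (1 : ℝ) ≤ k := by exact_mod_cast hk1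
    have hk2' : (k : ℝ) ≤ (n : ℝ) - 1 := by
      have : k ≤ n - 1 := hk2
      have : (k : ℝ) ≤ ((n - 1 : ℕ) : ℝ) := by exact_mod_cast this
      rwa [Nat.cast_sub (by omega), Nat.cast_one] at this
    have ha : 0 < phi n k / 2 := by
      unfold phi
      have h2 : (0:ℝ) < 2 * (k:ℝ) - 1 := by linarith
      positivity
    have ha' : phi n k / 2 < Real.pi := by
      unfold phi
      rw [div_lt_iff₀ (by norm_num : (0:ℝ) < 2), div_lt_iff₀ hn0]
      nlinarith
    have hb : 0 < phi n (k + 1) / 2 := by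
      unfold phi
      push_cast
      have h2 : (0:ℝ) < 2 * ((k:ℝ) + 1) - 1 := by linarith
      positivity
    have hb' : phi n (k + 1) / 2 < Real.pi := by
      unfold phi
      push_cast
      rw [div_lt_iff₀ (by norm_num : (0:ℝ) < 2), div_lt_iff₀ hn0]
      nlinarith
    have hmid : (phi n k / 2 + phi n (k + 1) / 2) / 2 = (k : ℝ) * Real.pi / n := by
      unfold phi
      push_cast
      field_simp
      ring
    have := key (phi n k / 2) (phi n (k + 1) / 2) ha hb ha' hb'
    rw [hmid] at this
    exact this
  -- sum the bound
  have hsum : ∑ k ∈ Finset.Icc 1 (n - 1), 1 / Real.sin ((k : ℝ) * Real.pi / n) ≤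
      ((∑ k ∈ Finset.Icc 1 (n - 1), g k) + ∑ k ∈ Finset.Icc 1 (n - 1), g (k + 1)) / 2 := by
    calc ∑ k ∈ Finset.Icc 1 (n - 1), 1 / Real.sin ((k : ℝ) * Real.pi / n)
        ≤ ∑ k ∈ Finset.Icc 1 (n - 1), (g k + g (k + 1)) / 2 := Finset.sum_le_sum hterm
      _ = _ := by rw [← Finset.sum_div, Finset.sum_add_distrib]
  -- reindex the two sums
  have hshift : ∑ k ∈ Finset.Icc 1 (n - 1), g (k + 1) = ∑ k ∈ Finset.Icc 2 n, g k := by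
    rw [show (2 : ℕ) = 1 + 1 by rfl, show n = (n - 1) + 1 by omega,
      ← Finset.map_add_right_Icc, Finset.sum_map]
    rfl
  have hS1 : ∑ k ∈ Finset.Icc 1 (n - 1), g k =
      (∑ k ∈ Finset.Icc 1 n, g k) - g n := by
    have : ∑ k ∈ Finset.Icc 1 n, g k = (∑ k ∈ Finset.Icc 1 (n - 1), g k) + g n := by
      conv_lhs => rw [show n = (n - 1) + 1 by omega]
      rw [Finset.sum_Icc_succ_top (by omega), show (n - 1) + 1 = n by omega]
    linarith
  have hS2 : ∑ k ∈ Finset.Icc 2 n, g k = (∑ k ∈ Finset.Icc 1 n, g k) - g 1 := by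
    have h1mem : 1 ∈ Finset.Icc 1 n := Finset.mem_Icc.mpr ⟨le_rfl, by omega⟩
    have := Finset.add_sum_erase _ g h1mem
    have herase : (Finset.Icc 1 n).erase 1 = Finset.Icc 2 n := by
      rw [Finset.Icc_erase_left]
      ext x
      simp [Nat.lt_iff_add_one_le]
    rw [← herase]
    linarith
  -- n * kn n
  have hkn : (n : ℝ) * kn n =
      (1 / 4) * ∑ k ∈ Finset.Icc 1 (n - 1), 1 / Real.sin ((k : ℝ) * Real.pi / n) := by
    unfold kn
    field_simp
    refine Finset.sum_congr rfl fun x _ => ?_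
    ring_nf
  rw [hkn]
  have : ∑ k ∈ Finset.Icc 1 (n - 1), 1 / Real.sin ((k : ℝ) * Real.pi / n) <
      ∑ k ∈ Finset.Icc 1 n, g k := by
    rw [hshift, hS1, hS2] at hsum
    linarith
  simp only [hg] at this
  linarith
end

section
/- For every integer n ≥ 3, one has k_n > k_n^−, where k_n^− = (1/(4π))·ln((1+cos(π/n))/(1−cos(π/n))) + 1/(4n·sin(π/n)). -/
/-- `k_n^− = (1/(4π))·ln((1+cos(π/n))/(1−cos(π/n))) + 1/(4n·sin(π/n))` -/
noncomputable def knMinus (n : ℕ) : ℝ :=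
  (1 / (4 * Real.pi)) *
      Real.log ((1 + Real.cos (Real.pi / n)) / (1 - Real.cos (Real.pi / n))) +
    1 / (4 * n * Real.sin (Real.pi / n))

/-- Antiderivative of `1/sin x` on `(0, π)`. -/
noncomputable def Faux (x : ℝ) : ℝ :=
  (Real.log (1 - Real.cos x) - Real.log (1 + Real.cos x)) / 2

lemma hasDerivAt_Faux {x : ℝ} (h0 : 0 < x) (hπ : x < Real.pi) :
    HasDerivAt Faux (Real.sin x)⁻¹ x := by
  have hs : 0 < Real.sin x := Real.sin_pos_of_pos_of_lt_pi h0 hπ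
  have h1 : (0:ℝ) < 1 - Real.cos x := by nlinarith [Real.sin_sq_add_cos_sq x]
  have h2 : (0:ℝ) < 1 + Real.cos x := by nlinarith [Real.sin_sq_add_cos_sq x]
  have d1 : HasDerivAt (fun y => 1 - Real.cos y) (Real.sin x) x := by
    simpa using (Real.hasDerivAt_cos x).const_sub 1
  have d2 : HasDerivAt (fun y => 1 + Real.cos y) (-Real.sin x) x := by
    simpa using (Real.hasDerivAt_cos x).const_add 1
  have key := ((d1.log h1.ne').sub (d2.log h2.ne')).div_const 2
  refine key.congr_deriv ?_
  have hs' := hs.ne'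
  have h1' := h1.ne'
  have h2' := h2.ne'
  field_simp
  nlinarith [Real.sin_sq_add_cos_sq x]

lemma hasDerivAt_csc {x : ℝ} (hs : Real.sin x ≠ 0) :
    HasDerivAt (fun y => (Real.sin y)⁻¹) (-Real.cos x / Real.sin x ^ 2) x :=
  (Real.hasDerivAt_sin x).inv hs

lemma hasDerivAt_csc' {x : ℝ} (hs : Real.sin x ≠ 0) :
    HasDerivAt (fun y => -Real.cos y / Real.sin y ^ 2)
      ((1 + Real.cos x ^ 2) / Real.sin x ^ 3) x := by
  have d1 : HasDerivAt (fun y => -Real.cos y) (Real.sin x) x := by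
    have := (Real.hasDerivAt_cos x).neg; rwa [neg_neg] at this
  have d2 : HasDerivAt (fun y => Real.sin y ^ 2) (2 * Real.sin x ^ 1 * Real.cos x) x :=
    (Real.hasDerivAt_sin x).pow 2
  have key := d1.div d2 (pow_ne_zero 2 hs)
  refine key.congr_deriv ?_
  rw [div_eq_div_iff (by positivity) (by positivity)]
  nlinarith [Real.sin_sq_add_cos_sq x, sq_nonneg (Real.sin x), sq_nonneg (Real.cos x)]

lemma hasDerivAt_haux {a y : ℝ} (hs : Real.sin y ≠ 0) :
    HasDerivAt (fun t => (Real.sin a)⁻¹ - (Real.sin t)⁻¹ + (t - a) * (-Real.cos t / Real.sin t ^ 2))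
      ((y - a) * ((1 + Real.cos y ^ 2) / Real.sin y ^ 3)) y := by
  have d1 := (hasDerivAt_csc hs).const_sub ((Real.sin a)⁻¹)
  have d2 : HasDerivAt (fun t : ℝ => t - a) 1 y := (hasDerivAt_id y).sub_const a
  have d3 := d2.mul (hasDerivAt_csc' hs)
  have key := d1.add d3
  refine key.congr_deriv ?_
  ring

/-- Strict trapezoid inequality for `1/sin` on `(0, π)`. -/
lemma trapezoid {a b : ℝ} (ha : 0 < a) (hab : a < b) (hb : b < Real.pi) :
    Faux b - Faux a < (b - a) * ((Real.sin a)⁻¹ + (Real.sin b)⁻¹) / 2 := by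
  have hmem : ∀ y ∈ Set.Icc a b, Real.sin y ≠ 0 := fun y hy =>
    (Real.sin_pos_of_pos_of_lt_pi (lt_of_lt_of_le ha hy.1) (lt_of_le_of_lt hy.2 hb)).ne'
  -- step 1: the trapezoid-derivative term is positive on (a, b]
  have hpos : ∀ y ∈ Set.Ioc a b,
      0 < (Real.sin a)⁻¹ - (Real.sin y)⁻¹ + (y - a) * (-Real.cos y / Real.sin y ^ 2) := by
    have hmono : StrictMonoOn
        (fun t => (Real.sin a)⁻¹ - (Real.sin t)⁻¹ + (t - a) * (-Real.cos t / Real.sin t ^ 2))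
        (Set.Icc a b) := by
      apply strictMonoOn_of_deriv_pos (convex_Icc a b)
      · intro y hy
        exact (hasDerivAt_haux (hmem y hy)).continuousAt.continuousWithinAt
      · intro y hy
        rw [interior_Icc] at hy
        rw [(hasDerivAt_haux (hmem y (Set.mem_Icc_of_Ioo hy))).deriv]
        have hsy := Real.sin_pos_of_pos_of_lt_pi (ha.trans hy.1) (hy.2.trans hb)
        have h1 : 0 < y - a := sub_pos.mpr hy.1
        positivity
    intro y hy
    have h0 := hmono (Set.left_mem_Icc.mpr hab.le) ⟨hy.1.le, hy.2⟩ hy.1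
    simpa using h0
  -- step 2: the trapezoid error function is strictly monotone
  have hgd : ∀ y ∈ Set.Icc a b,
      HasDerivAt (fun t => (t - a) * ((Real.sin a)⁻¹ + (Real.sin t)⁻¹) / 2 - Faux t)
        (((Real.sin a)⁻¹ - (Real.sin y)⁻¹ + (y - a) * (-Real.cos y / Real.sin y ^ 2)) / 2) y := by
    intro y hy
    have hy0 : 0 < y := lt_of_lt_of_le ha hy.1
    have hyπ : y < Real.pi := lt_of_le_of_lt hy.2 hb
    have dadd : HasDerivAt (fun t => (Real.sin a)⁻¹ + (Real.sin t)⁻¹)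
        (-Real.cos y / Real.sin y ^ 2) y := by
      simpa using (hasDerivAt_csc (hmem y hy)).const_add ((Real.sin a)⁻¹)
    have d1 : HasDerivAt (fun t => (t - a) * ((Real.sin a)⁻¹ + (Real.sin t)⁻¹))
        (1 * ((Real.sin a)⁻¹ + (Real.sin y)⁻¹) + (y - a) * (-Real.cos y / Real.sin y ^ 2)) y :=
      ((hasDerivAt_id y).sub_const a).mul dadd
    have key := (d1.div_const 2).sub (hasDerivAt_Faux hy0 hyπ)
    refine key.congr_deriv ?_
    ring
  have hgmono : StrictMonoOn (fun t => (t - a) * ((Real.sin a)⁻¹ + (Real.sin t)⁻¹) / 2 - Faux t)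
      (Set.Icc a b) := by
    apply strictMonoOn_of_deriv_pos (convex_Icc a b)
    · intro y hy
      exact (hgd y hy).continuousAt.continuousWithinAt
    · intro y hy
      rw [interior_Icc] at hy
      rw [(hgd y (Set.mem_Icc_of_Ioo hy)).deriv]
      have := hpos y ⟨hy.1, hy.2.le⟩
      linarith
  have key := hgmono (Set.left_mem_Icc.mpr hab.le) (Set.right_mem_Icc.mpr hab.le) hab
  simp only [sub_self, zero_mul, zero_div, zero_sub] at key
  linarith

/-- For every `n ≥ 3`, `k_n > k_n^−`. -/
theorem kn_gt_knMinus (n : ℕ) (hn : 3 ≤ n) : kn n > knMinus n := by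
  have hπ := Real.pi_pos
  have hn0 : (0:ℝ) < n := by exact_mod_cast (by omega : 0 < n)
  set m := n - 2 with hm
  have hmn : (m:ℝ) + 2 = n := by exact_mod_cast (by omega : m + 2 = n)
  set f : ℕ → ℝ := fun k => 1 / Real.sin (k * Real.pi / n) with hf
  have hmemb : ∀ k : ℕ, 1 ≤ k → k ≤ n - 1 →
      0 < (k:ℝ) * Real.pi / n ∧ (k:ℝ) * Real.pi / n < Real.pi := by
    intro k h1 h2
    have hk1 : (1:ℝ) ≤ k := by exact_mod_cast h1
    have hkn : (k:ℝ) < n := by exact_mod_cast (by omega : k < n)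
    refine ⟨by positivity, ?_⟩
    rw [div_lt_iff₀ hn0]
    nlinarith
  have hfs : ∀ k : ℕ, 1 ≤ k → k ≤ n - 1 → f (n - k) = f k := by
    intro k h1 h2
    have hc : ((n - k : ℕ) : ℝ) = (n:ℝ) - k := by
      have hkn : k ≤ n := by omega
      push_cast [hkn]
      ring
    simp only [hf, hc]
    rw [show ((n:ℝ) - k) * Real.pi / n = Real.pi - k * Real.pi / n by field_simp,
      Real.sin_pi_sub]
  set T := ∑ i ∈ Finset.range m, f (i + 2) with hT
  -- splitting off the first term of the `kn` sum
  have hsplit : ∑ k ∈ Finset.Icc 1 (n - 1), 1 / Real.sin (k * Real.pi / n) = f 1 + T := by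
    have h1 : Finset.Icc 1 (n - 1) = Finset.Ico 1 n := by
      rw [← Finset.Ico_add_one_right_eq_Icc]
      congr 1
      omega
    rw [h1, Finset.sum_Ico_eq_sum_range]
    have h2 : n - 1 = m + 1 := by omega
    rw [h2, Finset.sum_range_succ' (fun i => f (1 + i)) m]
    rw [add_comm, hT]
    congr 1
    · apply Finset.sum_congr rfl
      intro i _
      congr 1
      omega
  -- symmetry of the summands
  have hsym : ∑ i ∈ Finset.range m, f (i + 1) = T := by
    rw [hT, ← Finset.sum_range_reflect (fun j => f (j + 2)) m]
    apply Finset.sum_congr rfl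
    intro i hi
    rw [Finset.mem_range] at hi
    have h1 : m - 1 - i + 2 = n - (i + 1) := by omega
    rw [h1, hfs (i + 1) (by omega) (by omega)]
  -- per-interval trapezoid bound
  have hstep : ∀ i ∈ Finset.range m,
      Faux (((i + 1 : ℕ) + 1 : ℕ) * Real.pi / n) - Faux ((i + 1 : ℕ) * Real.pi / n)
        < Real.pi / n * (f (i + 1) + f (i + 2)) / 2 := by
    intro i hi
    rw [Finset.mem_range] at hi
    have ha := hmemb (i + 1) (by omega) (by omega)
    have hb := hmemb (i + 2) (by omega) (by omega)
    have hab : ((i + 1 : ℕ):ℝ) * Real.pi / n < ((i + 2 : ℕ):ℝ) * Real.pi / n := by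
      push_cast
      rw [div_lt_div_iff₀ hn0 hn0]
      nlinarith
    have htz := trapezoid ha.1 hab hb.2
    have hd : ((i + 2 : ℕ):ℝ) * Real.pi / n - ((i + 1 : ℕ):ℝ) * Real.pi / n
        = Real.pi / n := by push_cast; field_simp; ring
    rw [hd] at htz
    have he : ((i + 1 : ℕ) + 1 : ℕ) = (i + 2 : ℕ) := by omega
    rw [he]
    simp only [hf, one_div]
    convert htz using 3
  -- telescoping and summation
  have htel : Faux ((m + 1 : ℕ) * Real.pi / n) - Faux ((0 + 1 : ℕ) * Real.pi / n)
      < Real.pi / n * T := by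
    have h0 := Finset.sum_range_sub (fun i => Faux ((i + 1 : ℕ) * Real.pi / n)) m
    rw [← h0]
    have hlt := Finset.sum_lt_sum_of_nonempty
      (Finset.nonempty_range_iff.mpr (by omega : m ≠ 0)) hstep
    refine hlt.trans_le (le_of_eq ?_)
    have hpt : ∀ i : ℕ, Real.pi / n * (f (i + 1) + f (i + 2)) / 2
        = Real.pi / (n * 2) * f (i + 1) + Real.pi / (n * 2) * f (i + 2) := by
      intro i; ring
    simp only [hpt, Finset.sum_add_distrib, ← Finset.mul_sum, hsym, ← hT]
    ring
  -- the log term equals the telescoped difference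
  have hθ0 : (0:ℝ) < Real.pi / n := by positivity
  have hθπ : Real.pi / n < Real.pi := div_lt_self hπ (by exact_mod_cast (by omega : 1 < n))
  have hs1 : 0 < Real.sin (Real.pi / n) := Real.sin_pos_of_pos_of_lt_pi hθ0 hθπ
  have hc1 : (0:ℝ) < 1 - Real.cos (Real.pi / n) := by
    nlinarith [Real.sin_sq_add_cos_sq (Real.pi / n), pow_pos hs1 2]
  have hc2 : (0:ℝ) < 1 + Real.cos (Real.pi / n) := by
    nlinarith [Real.sin_sq_add_cos_sq (Real.pi / n), pow_pos hs1 2]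
  have hL : Real.log ((1 + Real.cos (Real.pi / n)) / (1 - Real.cos (Real.pi / n)))
      = Faux ((m + 1 : ℕ) * Real.pi / n) - Faux ((0 + 1 : ℕ) * Real.pi / n) := by
    have h1 : ((0 + 1 : ℕ):ℝ) * Real.pi / n = Real.pi / n := by push_cast; ring
    have h2 : ((m + 1 : ℕ):ℝ) * Real.pi / n = Real.pi - Real.pi / n := by
      push_cast
      rw [show (m:ℝ) + 1 = (n:ℝ) - 1 by linarith]
      field_simp
    rw [h1, h2, Faux, Faux, Real.cos_pi_sub, Real.log_div hc2.ne' hc1.ne']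
    ring_nf
  -- putting everything together
  have hmain : 1 / (4 * Real.pi) *
      Real.log ((1 + Real.cos (Real.pi / n)) / (1 - Real.cos (Real.pi / n)))
      < 1 / (4 * n) * T := by
    rw [hL]
    have h3 := mul_lt_mul_of_pos_left htel (by positivity : (0:ℝ) < 1 / (4 * Real.pi))
    refine h3.trans_le (le_of_eq ?_)
    field_simp
  have hlast : 1 / (4 * (n:ℝ) * Real.sin (Real.pi / n)) = 1 / (4 * n) * f 1 := by
    simp only [hf, Nat.cast_one, one_mul]
    rw [one_div_mul_one_div]
  rw [kn, knMinus, hsplit, hlast, mul_add]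
  linarith
end

section
/- For every integer n ≥ 107, one has k_n > 3/4. -/
open Real Finset

private lemma quartic_nonneg (x : ℝ) (h0 : 0 ≤ x) (h2 : x ≤ 11/7) :
    (1199:ℝ)/96000 - (13/1536)*x + (5/6144)*x^2 + (5/36864)*x^3 - (25/1179648)*x^4 ≥ 0 := by
  nlinarith [sq_nonneg x, mul_nonneg h0 h0, sq_nonneg (x-11/7),
    mul_nonneg (mul_nonneg h0 h0) h0, mul_nonneg (sub_nonneg.2 h2) h0,
    mul_nonneg (mul_nonneg (sub_nonneg.2 h2) h0) h0,
    mul_nonneg (mul_nonneg (mul_nonneg (sub_nonneg.2 h2) h0) h0) h0]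

private lemma beta_nonneg (x : ℝ) (h0 : 0 < x) (hpi1 : (3.141592:ℝ) < π)
    (hpi2 : π < 3.141593) (h2 : x ≤ π/2) :
    (1/6 - (19/1000)*x) * (π*(π-x)) - 1 + x^2/6 - (19/1000)*x^3 ≥ 0 := by
  nlinarith [sq_nonneg (x - π/2), sq_nonneg x, mul_pos h0 h0,
    mul_nonneg (mul_nonneg h0.le h0.le) h0.le, mul_nonneg (sub_nonneg.2 h2) h0.le,
    mul_nonneg (mul_nonneg (sub_nonneg.2 h2) h0.le) h0.le]

private lemma key_half (x : ℝ) (h0 : 0 < x) (h2 : x ≤ π/2) :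
    Real.sin x * (π^2 - π*x + x^2) ≤ π*x*(π-x) := by
  have hpi1 : (3.141592 : ℝ) < π := by have := Real.pi_gt_d6; linarith
  have hpi2 : π < 3.141593 := Real.pi_lt_d6
  have hx2 : x ≤ 11/7 := by linarith
  set t := x/2 with ht
  have ht0 : 0 < t := by positivity
  have ht1 : |t| ≤ 1 := by rw [abs_of_pos ht0]; simp only [ht]; linarith
  have hs := abs_le.1 (Real.sin_bound ht1)
  have hc := abs_le.1 (Real.cos_bound ht1)
  rw [abs_of_pos ht0] at hs hc
  have hsu : Real.sin t ≤ t - t^3/6 + t^4*(5/96) := by nlinarith [hs.2, pow_pos ht0 4, mul_le_mul_of_nonneg_left (show t ≤ 1 by linarith) (pow_pos ht0 4).le]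
  have hcu : Real.cos t ≤ 1 - t^2/2 + t^4*(5/96) := by linarith [hc.2]
  have hsl : 0 ≤ Real.sin t :=
    Real.sin_nonneg_of_nonneg_of_le_pi (by positivity) (by simp only [ht]; linarith)
  have hcl : 0 ≤ Real.cos t := Real.cos_nonneg_of_mem_Icc
    ⟨by simp only [ht]; linarith, by simp only [ht]; linarith⟩
  have hsin : Real.sin x = 2 * Real.sin t * Real.cos t := by
    rw [ht, ← Real.sin_two_mul]; ring_nf
  have hU : Real.sin x ≤ 2 * (t - t^3/6 + t^4*(5/96)) * (1 - t^2/2 + t^4*(5/96)) := by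
    rw [hsin]
    have := mul_le_mul hsu hcu hcl (le_trans hsl hsu)
    linarith
  have hQ := quartic_nonneg x h0.le hx2
  have h4 : (0:ℝ) ≤ x^4 := by positivity
  have hid : (x - x^3/6 + (19/1000)*x^4)
      - 2 * (x/2 - (x/2)^3/6 + (x/2)^4*(5/96)) * (1 - (x/2)^2/2 + (x/2)^4*(5/96))
      = x^4 * ((1199:ℝ)/96000 - (13/1536)*x + (5/6144)*x^2 + (5/36864)*x^3
        - (25/1179648)*x^4) := by ring
  have hAV : 2 * (t - t^3/6 + t^4*(5/96)) * (1 - t^2/2 + t^4*(5/96))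
      ≤ x - x^3/6 + (19/1000)*x^4 := by
    rw [ht]
    linarith [mul_nonneg h4 hQ, hid]
  have hV : Real.sin x ≤ x - x^3/6 + (19/1000)*x^4 := le_trans hU hAV
  have hbeta := beta_nonneg x h0 hpi1 hpi2 h2
  have hq : (0:ℝ) ≤ π^2 - π*x + x^2 := by nlinarith [sq_nonneg (x - π/2)]
  have hid2 : π*x*(π-x) - (x - x^3/6 + (19/1000)*x^4) * (π^2 - π*x + x^2)
      = x^3 * ((1/6 - (19/1000)*x) * (π*(π-x)) - 1 + x^2/6 - (19/1000)*x^3) := by ring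
  have h3 : (0:ℝ) ≤ x^3 := by positivity
  linarith [mul_le_mul_of_nonneg_right hV hq, mul_nonneg h3 hbeta, hid2]

private lemma key_s3 (x : ℝ) (h0 : 0 < x) (h1 : x < π) :
    Real.sin x * (π^2 - π*x + x^2) ≤ π*x*(π-x) := by
  rcases le_or_gt x (π/2) with h | h
  · exact key_half x h0 h
  · have h0' : 0 < π - x := by linarith
    have h2' : π - x ≤ π/2 := by linarith
    have := key_half (π - x) h0' h2'
    rw [Real.sin_pi_sub] at this
    nlinarith [this]

private lemma recip_bound (x : ℝ) (h0 : 0 < x) (h1 : x < π) :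
    1/x + 1/(π - x) - 1/π ≤ 1/Real.sin x := by
  have hs : 0 < Real.sin x := Real.sin_pos_of_pos_of_lt_pi h0 h1
  have hpix : 0 < π - x := by linarith
  have hpi : 0 < π := Real.pi_pos
  have hD : 0 < π * x * (π - x) := by positivity
  have heq : 1/x + 1/(π - x) - 1/π = (π^2 - π*x + x^2) / (π * x * (π - x)) := by
    field_simp; ring
  rw [heq, div_le_div_iff₀ hD hs]
  calc (π^2 - π*x + x^2) * Real.sin x = Real.sin x * (π^2 - π*x + x^2) := by ring
    _ ≤ π*x*(π-x) := key_s3 x h0 h1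
    _ = 1 * (π * x * (π - x)) := by ring


/-- For every integer `n ≥ 107`, `k_n > 3/4`. -/
theorem kn_gt_three_quarters (n : ℕ) (hn : 107 ≤ n) : kn n > 3 / 4 := by
  have hpi : (0:ℝ) < π := Real.pi_pos
  have hpi2 : π < 3.141593 := Real.pi_lt_d6
  have hn0 : 0 < n := by omega
  have hN : (0:ℝ) < (n:ℝ) := by exact_mod_cast hn0
  set H : ℝ := ∑ k ∈ Finset.Icc (1:ℕ) (n-1), 1/(k:ℝ) with hH
  have hterm : ∀ k ∈ Finset.Icc 1 (n-1),
      ((n:ℝ)/π) * (1/(k:ℝ)) + ((n:ℝ)/π) * (1/((n-k:ℕ):ℝ)) - 1/π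
        ≤ 1 / Real.sin (k * π / n) := by
    intro k hk
    rw [Finset.mem_Icc] at hk
    have hk1 : 1 ≤ k := hk.1
    have hkr : (1:ℝ) ≤ (k:ℝ) := by exact_mod_cast hk1
    have hkn : k < n := by omega
    have hknr : (k:ℝ) < (n:ℝ) := by exact_mod_cast hkn
    have hx0 : 0 < (k:ℝ) * π / n := by positivity
    have hx1 : (k:ℝ) * π / n < π := by
      rw [div_lt_iff₀ hN]; nlinarith
    have hmain := recip_bound _ hx0 hx1
    have hsub : ((n-k:ℕ):ℝ) = (n:ℝ) - (k:ℝ) := by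
      rw [Nat.cast_sub hkn.le]
    have he1 : 1/((k:ℝ) * π / n) = ((n:ℝ)/π) * (1/(k:ℝ)) := by
      field_simp
    have he2 : 1/(π - (k:ℝ) * π / n) = ((n:ℝ)/π) * (1/((n-k:ℕ):ℝ)) := by
      rw [hsub]
      have hrw : π - (k:ℝ) * π / n = ((n:ℝ) - k) * π / n := by field_simp
      rw [hrw]
      have hnk : (0:ℝ) < (n:ℝ) - k := by linarith
      field_simp
    rw [he1, he2] at hmain
    exact hmain
  have hsum := Finset.sum_le_sum hterm
  have hre : ∑ k ∈ Finset.Icc 1 (n-1), (1:ℝ)/((n-k:ℕ):ℝ) = H := by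
    rw [hH]
    apply Finset.sum_nbij' (i := fun k => n - k) (j := fun k => n - k)
    · intro a ha; rw [Finset.mem_Icc] at *; omega
    · intro a ha; rw [Finset.mem_Icc] at *; omega
    · intro a ha; rw [Finset.mem_Icc] at ha; omega
    · intro a ha; rw [Finset.mem_Icc] at ha; omega
    · intro a ha; rfl
  have hcard : (Finset.Icc 1 (n-1)).card = n - 1 := by
    rw [Nat.card_Icc]; omega
  have hn1 : ((n-1:ℕ):ℝ) = (n:ℝ) - 1 := by
    rw [Nat.cast_sub (by omega : 1 ≤ n)]; norm_num
  have hS : ((n:ℝ)/π) * H + ((n:ℝ)/π) * H - ((n-1:ℕ):ℝ)/π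
      ≤ ∑ k ∈ Finset.Icc 1 (n-1), 1 / Real.sin (k * π / n) := by
    calc ((n:ℝ)/π) * H + ((n:ℝ)/π) * H - ((n-1:ℕ):ℝ)/π
        = ∑ k ∈ Finset.Icc 1 (n-1),
          (((n:ℝ)/π) * (1/(k:ℝ)) + ((n:ℝ)/π) * (1/((n-k:ℕ):ℝ)) - 1/π) := by
          rw [Finset.sum_sub_distrib, Finset.sum_add_distrib, ← Finset.mul_sum,
            ← Finset.mul_sum, hre, Finset.sum_const, hcard, ← hH]
          simp only [nsmul_eq_mul, hn1]
          ring
      _ ≤ _ := hsum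
  have hH106 : (5.2129:ℝ) < ∑ k ∈ Finset.Icc (1:ℕ) 106, 1/(k:ℝ) := by
    rw [← Finset.Ico_add_one_right_eq_Icc, Finset.sum_Ico_eq_sum_range]
    norm_num [Finset.sum_range_succ]
  have hHmono : ∑ k ∈ Finset.Icc (1:ℕ) 106, 1/(k:ℝ) ≤ H := by
    rw [hH]
    apply Finset.sum_le_sum_of_subset_of_nonneg
    · apply Finset.Icc_subset_Icc_right; omega
    · intro i _ _; positivity
  have hHlb : (5.2129:ℝ) < H := lt_of_lt_of_le hH106 hHmono
  have hfinal : 3 * (n:ℝ) < ((n:ℝ)/π) * H + ((n:ℝ)/π) * H - ((n-1:ℕ):ℝ)/π := by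
    rw [hn1]
    rw [show ((n:ℝ)/π) * H + ((n:ℝ)/π) * H - ((n:ℝ)-1)/π
      = (2*(n:ℝ)*H - ((n:ℝ)-1))/π by ring]
    rw [lt_div_iff₀ hpi]
    have h1 := mul_lt_mul_of_pos_left hHlb hN
    have h2 := mul_lt_mul_of_pos_left hpi2 hN
    nlinarith
  rw [kn]
  have h4n : (0:ℝ) < 1/(4*(n:ℝ)) := by positivity
  calc (3:ℝ)/4 = (1/(4*(n:ℝ))) * (3*(n:ℝ)) := by field_simp
    _ < (1/(4*(n:ℝ))) * ∑ k ∈ Finset.Icc 1 (n-1), 1 / Real.sin (k * π / n) := by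
        apply mul_lt_mul_of_pos_left _ h4n
        exact lt_of_lt_of_le hfinal hS
end

section
/- For every integer n ≥ 2 and all real parameters μ > 0 and ε > 0, the equation F(x, ε, μ) = 0 has at least one solution x > 0 (existence of at least one rosette central configuration). -/
/-- The central configuration equation function `F(x, ε, μ)`. -/
noncomputable def F (n : ℕ) (x ε μ : ℝ) : ℝ :=
  μ / n * (1 - x ^ 3) + kn n * (ε - x ^ 3) +
    x ^ 3 / n * ∑ k ∈ Finset.Icc 1 n,
      ((1 - ε) - (1 / x) * (1 - ε * x ^ 2) * Real.cos (phi n k)) /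
        (1 + x ^ 2 - 2 * x * Real.cos (phi n k)) ^ ((3 : ℝ) / 2)

/-- Auxiliary regularized form of `F` without the `1/x` singularity. -/
noncomputable def G (n : ℕ) (x ε μ : ℝ) : ℝ :=
  μ / n * (1 - x ^ 3) + kn n * (ε - x ^ 3) +
    1 / n * ∑ k ∈ Finset.Icc 1 n,
      (x ^ 3 * (1 - ε) - x ^ 2 * (1 - ε * x ^ 2) * Real.cos (phi n k)) /
        (1 + x ^ 2 - 2 * x * Real.cos (phi n k)) ^ ((3 : ℝ) / 2)

lemma kn_pos {n : ℕ} (hn : 2 ≤ n) : 0 < kn n := by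
  have hn0 : (0:ℝ) < n := by exact_mod_cast (by omega : 0 < n)
  have hπ := Real.pi_pos
  apply mul_pos (by positivity)
  apply Finset.sum_pos
  · intro k hk
    rw [Finset.mem_Icc] at hk
    have hk1 : (1:ℝ) ≤ k := by exact_mod_cast hk.1
    have hk2 : (k:ℝ) < n := by exact_mod_cast (by omega : k < n)
    have hs : 0 < Real.sin (k * Real.pi / n) := by
      apply Real.sin_pos_of_pos_of_lt_pi
      · positivity
      · rw [div_lt_iff₀ hn0]
        nlinarith
    positivity
  · exact ⟨1, by rw [Finset.mem_Icc]; omega⟩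

lemma cos_phi_lt_one {n k : ℕ} (hn : 2 ≤ n) (hk1 : 1 ≤ k) (hk2 : k ≤ n) :
    Real.cos (phi n k) < 1 := by
  have hπ := Real.pi_pos
  have hn0 : (0:ℝ) < n := by exact_mod_cast (by omega : 0 < n)
  have hk1' : (1:ℝ) ≤ k := by exact_mod_cast hk1
  have hk2' : (k:ℝ) ≤ n := by exact_mod_cast hk2
  have h1 : 0 < phi n k := by
    unfold phi
    apply div_pos _ hn0
    nlinarith
  have h2 : phi n k < 2 * Real.pi := by
    unfold phi
    rw [div_lt_iff₀ hn0]
    nlinarith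
  refine lt_of_le_of_ne (Real.cos_le_one _) (fun h => ?_)
  have := (Real.cos_eq_one_iff_of_lt_of_lt (by linarith) h2).mp h
  linarith

lemma D_pos {x c : ℝ} (hx : 0 ≤ x) (hc : c < 1) : 0 < 1 + x ^ 2 - 2 * x * c := by
  nlinarith [sq_nonneg (1 - x), mul_nonneg hx (show (0:ℝ) ≤ 1 - c by linarith)]

lemma F_eq_G (n : ℕ) (x ε μ : ℝ) (hx : 0 ≤ x) : F n x ε μ = G n x ε μ := by
  rcases eq_or_lt_of_le hx with h | h
  · subst h
    norm_num [F, G]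
  · unfold F G
    congr 1
    rw [Finset.mul_sum, Finset.mul_sum]
    refine Finset.sum_congr rfl fun k _ => ?_
    have hx0 : x ≠ 0 := ne_of_gt h
    rw [div_mul_div_comm, div_mul_div_comm]
    congr 1
    field_simp

lemma G_contOn (n : ℕ) (hn : 2 ≤ n) (ε μ b : ℝ) :
    ContinuousOn (fun x => G n x ε μ) (Set.Icc 0 b) := by
  unfold G
  apply ContinuousOn.add
  · apply ContinuousOn.add
    · exact (Continuous.continuousOn (by continuity))
    · exact (Continuous.continuousOn (by continuity))
  · apply ContinuousOn.mul continuousOn_const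
    apply continuousOn_finset_sum
    intro k hk
    rw [Finset.mem_Icc] at hk
    apply ContinuousOn.div
    · exact (Continuous.continuousOn (by continuity))
    · exact ContinuousOn.rpow_const (Continuous.continuousOn (by continuity))
        (fun x _ => Or.inr (by norm_num))
    · intro x hx
      exact ne_of_gt (Real.rpow_pos_of_pos
        (D_pos hx.1 (cos_phi_lt_one hn hk.1 hk.2)) _)

lemma term_bound {b c ε : ℝ} (hb : 2 ≤ b) (hε : 0 < ε) (hc : c < 1) (hc' : -1 ≤ c) :
    (b ^ 3 * (1 - ε) - b ^ 2 * (1 - ε * b ^ 2) * c) / (1 + b ^ 2 - 2 * b * c) ^ ((3 : ℝ) / 2)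
      ≤ 8 * |1 - ε| + 8 + 8 * ε * b := by
  have hb0 : (0:ℝ) < b := by linarith
  have h1 : (b / 2) ^ 2 ≤ 1 + b ^ 2 - 2 * b * c := by
    nlinarith [sq_nonneg (b - 2), mul_le_mul_of_nonneg_left hc.le (by linarith : (0:ℝ) ≤ 2 * b)]
  have heq : ((b / 2) ^ 2 : ℝ) ^ ((3:ℝ) / 2) = b ^ 3 / 8 := by
    rw [← Real.rpow_natCast (b / 2) 2, ← Real.rpow_mul (by positivity)]
    norm_num
    ring
  have hD : b ^ 3 / 8 ≤ (1 + b ^ 2 - 2 * b * c) ^ ((3:ℝ) / 2) := by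
    rw [← heq]
    exact Real.rpow_le_rpow (by positivity) h1 (by norm_num)
  have hnum : b ^ 3 * (1 - ε) - b ^ 2 * (1 - ε * b ^ 2) * c
      ≤ b ^ 3 * |1 - ε| + b ^ 2 + ε * b ^ 4 := by
    have h5 : b ^ 3 * (1 - ε) ≤ b ^ 3 * |1 - ε| :=
      mul_le_mul_of_nonneg_left (le_abs_self _) (by positivity)
    nlinarith [mul_nonneg (sq_nonneg b)
        (mul_nonneg (mul_nonneg hε.le (sq_nonneg b)) (by linarith : (0:ℝ) ≤ 1 - c)),
      mul_nonneg (sq_nonneg b) (by linarith : (0:ℝ) ≤ 1 + c)]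
  have hM : (0:ℝ) ≤ b ^ 3 * |1 - ε| + b ^ 2 + ε * b ^ 4 := by positivity
  have h6 : (b ^ 3 * (1 - ε) - b ^ 2 * (1 - ε * b ^ 2) * c) /
      (1 + b ^ 2 - 2 * b * c) ^ ((3 : ℝ) / 2)
      ≤ (b ^ 3 * |1 - ε| + b ^ 2 + ε * b ^ 4) / (b ^ 3 / 8) :=
    div_le_div₀ hM hnum (by positivity) hD
  refine h6.trans ?_
  rw [div_le_iff₀ (by positivity)]
  nlinarith [mul_nonneg (sq_nonneg b) (by linarith : (0:ℝ) ≤ b - 1), abs_nonneg (1 - ε),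
    mul_nonneg (abs_nonneg (1 - ε)) (pow_nonneg hb0.le 3)]

lemma final_neg {A K e v b : ℝ} (hA : 0 < A) (hK : 0 < K) (he : 0 < e) (hv : 0 ≤ v)
    (hb : 2 ≤ b) (hbk : (A + K * e + 8 * v + 8) + 8 * e + 1 ≤ K * b) :
    A * (1 - b ^ 3) + K * (e - b ^ 3) + (8 * v + 8 + 8 * e * b) < 0 := by
  have h1 := mul_le_mul_of_nonneg_right hbk (sq_nonneg b)
  have h2 : 0 ≤ (A + K * e + 8 * v + 8) * (b ^ 2 - 1) := by
    apply mul_nonneg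
    · nlinarith [mul_pos hK he]
    · nlinarith
  have h3 : 0 ≤ 8 * e * (b ^ 2 - b) := by
    apply mul_nonneg (by linarith)
    nlinarith
  have h4 : 0 < A * b ^ 3 := by positivity
  have h5 : (4:ℝ) ≤ b ^ 2 := by nlinarith
  nlinarith [h1, h2, h3, h4, h5]

/-- For every `n ≥ 2`, `μ > 0`, `ε > 0`, there is at least one rosette central
configuration, i.e. a solution `x > 0` of `F(x, ε, μ) = 0`. -/
theorem exists_rosette_cc (n : ℕ) (hn : 2 ≤ n) (μ ε : ℝ) (hμ : 0 < μ) (hε : 0 < ε) :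
    ∃ x : ℝ, 0 < x ∧ F n x ε μ = 0 := by
  have hknp := kn_pos hn
  have hn0 : (0:ℝ) < n := by exact_mod_cast (by omega : 0 < n)
  have hμn : 0 < μ / n := by positivity
  have habs : (0:ℝ) ≤ |1 - ε| := abs_nonneg _
  obtain ⟨b, hb2, hbk⟩ : ∃ b : ℝ, 2 ≤ b ∧
      (μ / n + kn n * ε + 8 * |1 - ε| + 8) + 8 * ε + 1 ≤ kn n * b := by
    refine ⟨max 2 (((μ / n + kn n * ε + 8 * |1 - ε| + 8) + 8 * ε + 1) / kn n), le_max_left _ _, ?_⟩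
    have h := le_max_right 2 (((μ / n + kn n * ε + 8 * |1 - ε| + 8) + 8 * ε + 1) / kn n)
    rw [div_le_iff₀ hknp] at h
    linarith
  have hb0 : (0:ℝ) < b := by linarith
  -- G at 0 is positive
  have hG0 : 0 < G n 0 ε μ := by
    have hGz : G n 0 ε μ = μ / n + kn n * ε := by
      norm_num [G]
    rw [hGz]; positivity
  -- G at b is negative
  have hGb : G n b ε μ < 0 := by
    have hB : ∀ k ∈ Finset.Icc 1 n,
        (b ^ 3 * (1 - ε) - b ^ 2 * (1 - ε * b ^ 2) * Real.cos (phi n k)) /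
          (1 + b ^ 2 - 2 * b * Real.cos (phi n k)) ^ ((3 : ℝ) / 2)
        ≤ 8 * |1 - ε| + 8 + 8 * ε * b := by
      intro k hk
      rw [Finset.mem_Icc] at hk
      exact term_bound hb2 hε (cos_phi_lt_one hn hk.1 hk.2) (Real.neg_one_le_cos _)
    have hsum := Finset.sum_le_card_nsmul (Finset.Icc 1 n) _ _ hB
    rw [Nat.card_Icc] at hsum
    have hcard : ((n + 1 - 1 : ℕ) : ℝ) = (n:ℝ) := by norm_num
    rw [nsmul_eq_mul, hcard] at hsum
    have h1n : 1 / (n:ℝ) * (∑ k ∈ Finset.Icc 1 n,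
        (b ^ 3 * (1 - ε) - b ^ 2 * (1 - ε * b ^ 2) * Real.cos (phi n k)) /
          (1 + b ^ 2 - 2 * b * Real.cos (phi n k)) ^ ((3 : ℝ) / 2))
        ≤ 8 * |1 - ε| + 8 + 8 * ε * b := by
      have h := mul_le_mul_of_nonneg_left hsum (by positivity : (0:ℝ) ≤ 1 / n)
      calc 1 / (n:ℝ) * _ ≤ 1 / (n:ℝ) * ((n:ℝ) * (8 * |1 - ε| + 8 + 8 * ε * b)) := h
        _ = 8 * |1 - ε| + 8 + 8 * ε * b := by field_simp
    have hGle : G n b ε μ ≤ μ / n * (1 - b ^ 3) + kn n * (ε - b ^ 3) +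
        (8 * |1 - ε| + 8 + 8 * ε * b) := by
      unfold G
      linarith [h1n]
    have hfin := final_neg hμn hknp hε habs hb2 hbk
    linarith
  -- intermediate value theorem
  have hcont := G_contOn n hn ε μ b
  have h0mem : (0:ℝ) ∈ Set.Icc (G n b ε μ) (G n 0 ε μ) := ⟨hGb.le, hG0.le⟩
  obtain ⟨x, hx, hGx0⟩ := intermediate_value_Icc' (by linarith : (0:ℝ) ≤ b) hcont h0mem
  have hGx : G n x ε μ = 0 := hGx0
  refine ⟨x, ?_, ?_⟩
  · rcases eq_or_lt_of_le hx.1 with h | h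
    · exfalso
      rw [← h] at hGx
      linarith
    · exact h
  · rw [F_eq_G n x ε μ hx.1]
    exact hGx
end
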